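/- Under the discrete-time model with two futures of distinct maturities (so B_j^{(i₁)} ≠ B_j^{(i₂)}), the optimal weight w* = −(α₀α₁ + ν₀ν₁)/(α₁² + ν₁²) in the first futures contract, together with 1 − w* in the second, minimizes the conditional expected squared tracking error E[((X_{j+1}/X_j) − β(S_{j+1}/S_j) + β − 1)² | F_j] over all weight pairs summing to 1, and the minimal value is (ν₁α₀ − ν₀α₁)²/(α₁² + ν₁²). -/

import Mathlib

open MeasureTheory ProbabilityTheory

namespace Stmt13Aux
open Real Filter Asymptotics
open scoped ENNReal NNReal


noncomputable def E : ℝ → ℝ := fun x => Real.exp (-(1/2) * x ^ 2)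

lemma hE : Integrable E := integrable_exp_neg_mul_sq (by norm_num)
lemma hxE : Integrable (fun x => x * E x) := integrable_mul_exp_neg_mul_sq (by norm_num)
lemma hx2E : Integrable (fun x => x ^ 2 * E x) := by
  have := integrable_rpow_mul_exp_neg_mul_sq (by norm_num : (0:ℝ) < 1/2)
    (by norm_num : (-1:ℝ) < 2)
  simpa [E, Real.rpow_two] using this

lemma tE_top : Tendsto E atTop (nhds 0) :=
  Real.tendsto_exp_atBot.comp
    ((tendsto_pow_atTop two_ne_zero).const_mul_atTop_of_neg (by norm_num))

lemma tE_bot : Tendsto E atBot (nhds 0) := by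
  have h : E ∘ Neg.neg = E := by funext x; simp [E, Function.comp]
  have := tE_top.comp tendsto_neg_atBot_atTop
  rwa [h] at this

lemma txE_top : Tendsto (fun x => x * E x) atTop (nhds 0) := by
  have h := rpow_mul_exp_neg_mul_sq_isLittleO_exp_neg (by norm_num : (0:ℝ) < 1/2) 1
  simp_rw [Real.rpow_one] at h
  refine h.isBigO.trans_tendsto ?_
  exact Real.tendsto_exp_atBot.comp (tendsto_id.const_mul_atTop_of_neg (by norm_num))

lemma txE_bot : Tendsto (fun x => x * E x) atBot (nhds 0) := by
  have h : (fun x : ℝ => -((fun x => x * E x) ∘ Neg.neg) x) = fun x => x * E x := by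
    funext x; simp [E, Function.comp]
  have := (txE_top.comp tendsto_neg_atBot_atTop).neg
  rw [neg_zero] at this
  rwa [h] at this

lemma hEderiv (x : ℝ) : HasDerivAt E (-x * E x) x := by
  have h := ((hasDerivAt_pow 2 x).const_mul (-(1/2 : ℝ))).exp
  refine h.congr_deriv ?_
  simp [E]; ring

lemma I0 : ∫ x, E x = Real.sqrt (2 * Real.pi) := by
  rw [show E = fun x => Real.exp (-(1/2) * x ^ 2) from rfl, integral_gaussian,
    show Real.pi / (1/2) = 2 * Real.pi by ring]

lemma I1 : (∫ x, x * E x) = 0 := by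
  have hd : ∀ x : ℝ, HasDerivAt (fun x => -E x) (x * E x) x := by
    intro x
    refine (hEderiv x).neg.congr_deriv ?_; ring
  have := integral_of_hasDerivAt_of_tendsto hd hxE
    (by simpa using tE_bot.neg) (by simpa using tE_top.neg)
  simpa using this

lemma I2 : (∫ x, x ^ 2 * E x) = Real.sqrt (2 * Real.pi) := by
  have hd : ∀ x : ℝ, HasDerivAt (fun x => -(x * E x)) (x ^ 2 * E x - E x) x := by
    intro x
    have := ((hasDerivAt_id x).mul (hEderiv x)).neg
    refine this.congr_deriv ?_; simp only [id_eq]; ring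
  have h0 := integral_of_hasDerivAt_of_tendsto hd (hx2E.sub hE)
    (by simpa using txE_bot.neg) (by simpa using txE_top.neg)
  rw [integral_sub hx2E hE, I0] at h0
  linarith [h0]

lemma hpdf (x : ℝ) : gaussianPDFReal 0 1 x = (Real.sqrt (2 * Real.pi))⁻¹ * E x := by
  simp only [gaussianPDFReal, NNReal.coe_one, mul_one, sub_zero, E]
  rw [show ∀ y : ℝ, -y ^ 2 / 2 = -(1/2) * y ^ 2 from fun y => by ring]

lemma gauss_quad (a b : ℝ) :
    ∫ x, (a + b * x) ^ 2 ∂(gaussianReal 0 1) = a ^ 2 + b ^ 2 := by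
  rw [gaussianReal_of_var_ne_zero 0 one_ne_zero]
  have hmeq : gaussianPDF 0 1 =
      fun x => ((fun x => (gaussianPDFReal 0 1 x).toNNReal) x : ℝ≥0∞) := rfl
  rw [hmeq, integral_withDensity_eq_integral_smul
    ((measurable_gaussianPDFReal 0 1).real_toNNReal) (fun x => (a + b * x) ^ 2)]
  set c := (Real.sqrt (2 * Real.pi))⁻¹ with hc
  have hint : (fun x => (gaussianPDFReal 0 1 x).toNNReal • (a + b * x) ^ 2)
      = fun x => (c * a ^ 2) * E x + ((c * (2 * a * b)) * (x * E x)
          + (c * b ^ 2) * (x ^ 2 * E x)) := by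
    funext x
    rw [NNReal.smul_def, Real.coe_toNNReal _ (gaussianPDFReal_nonneg 0 1 x), hpdf x, smul_eq_mul]
    ring
  have h2 : Integrable (fun x : ℝ => (c * (2 * a * b)) * (x * E x)
      + (c * b ^ 2) * (x ^ 2 * E x)) := (hxE.const_mul _).add (hx2E.const_mul _)
  rw [hint, integral_add (hE.const_mul _) h2,
    integral_add (hxE.const_mul _) (hx2E.const_mul _), integral_const_mul,
    integral_const_mul, integral_const_mul, I0, I1, I2]
  have hs : (0:ℝ) < Real.sqrt (2 * Real.pi) := Real.sqrt_pos.2 (by positivity)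
  field_simp [hc]
  rw [hc]
  field_simp
  ring


end Stmt13Aux

open Stmt13Aux in
/-- Proposition 4.1: with two futures of distinct maturities (`B₁ ≠ B₂`) and weights
`(w, 1 − w)`, the weight `w* = −(α₀α₁ + ν₀ν₁)/(α₁² + ν₁²)` minimizes the expected
squared tracking error `E[(X_{j+1}/X_j − β S_{j+1}/S_j + β − 1)²]`, attaining
`(ν₁α₀ − ν₀α₁)²/(α₁² + ν₁²)`. -/
theorem stmt_13 {Ω : Type*} [MeasureSpace Ω] (P : Measure Ω) [IsProbabilityMeasure P]
    (β Sj : ℝ) (hS : Sj ≠ 0)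
    (Z S' : Ω → ℝ) (X'divX : ℝ → Ω → ℝ)  -- portfolio return ratio as a function of w
    (hZmeas : Measurable Z) (hZ : Measure.map Z P = gaussianReal 0 1)
    (α₀ α₁ ν₀ ν₁ : ℝ) (hB : (α₁, ν₁) ≠ (0, 0))
    -- the return difference has the affine-in-Z form with coefficients affine in w
    (hdiff : ∀ (w : ℝ) (ω : Ω),
      X'divX w ω - β * (S' ω / Sj) + β - 1 = (α₀ + α₁ * w) + (ν₀ + ν₁ * w) * Z ω) :
    let wstar : ℝ := -(α₀ * α₁ + ν₀ * ν₁) / (α₁ ^ 2 + ν₁ ^ 2)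
    let F : ℝ → ℝ := fun w => ∫ ω, (X'divX w ω - β * (S' ω / Sj) + β - 1) ^ 2 ∂P
    (∀ w : ℝ, F wstar ≤ F w) ∧
      F wstar = (ν₁ * α₀ - ν₀ * α₁) ^ 2 / (α₁ ^ 2 + ν₁ ^ 2) := by

  intro wstar F
  have hA : 0 < α₁ ^ 2 + ν₁ ^ 2 := by
    rcases eq_or_ne α₁ 0 with h1 | h1
    · rcases eq_or_ne ν₁ 0 with h2 | h2
      · exact absurd (by rw [h1, h2]) hB
      · have : 0 < ν₁ ^ 2 := by positivity
        nlinarith [sq_nonneg α₁]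
    · have : 0 < α₁ ^ 2 := by positivity
      nlinarith [sq_nonneg ν₁]
  have key : ∀ w : ℝ, F w = (α₀ + α₁ * w) ^ 2 + (ν₀ + ν₁ * w) ^ 2 := by
    intro w
    have h1 : F w = ∫ ω, ((α₀ + α₁ * w) + (ν₀ + ν₁ * w) * Z ω) ^ 2 ∂P := by
      show (∫ ω, (X'divX w ω - β * (S' ω / Sj) + β - 1) ^ 2 ∂P) = _
      congr 1
      funext ω
      rw [hdiff w ω]
    have hgm : AEStronglyMeasurable (fun x : ℝ =>
        ((α₀ + α₁ * w) + (ν₀ + ν₁ * w) * x) ^ 2) (Measure.map Z P) :=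
      ((continuous_const.add (continuous_const.mul continuous_id)).pow 2).aestronglyMeasurable
    have h2 := integral_map (μ := P) hZmeas.aemeasurable hgm
    rw [h1, ← h2, hZ, gauss_quad]
  have hFs : F wstar = (ν₁ * α₀ - ν₀ * α₁) ^ 2 / (α₁ ^ 2 + ν₁ ^ 2) := by
    rw [key]
    show (α₀ + α₁ * (-(α₀ * α₁ + ν₀ * ν₁) / (α₁ ^ 2 + ν₁ ^ 2))) ^ 2
        + (ν₀ + ν₁ * (-(α₀ * α₁ + ν₀ * ν₁) / (α₁ ^ 2 + ν₁ ^ 2))) ^ 2 = _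
    field_simp
    ring
  refine ⟨fun w => ?_, hFs⟩
  rw [key w, hFs, div_le_iff₀ hA]
  nlinarith [sq_nonneg ((α₁ ^ 2 + ν₁ ^ 2) * w + (α₀ * α₁ + ν₀ * ν₁))]
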